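/- arXiv:2307.04538 — 3 statements merged into one kernel-verified Lean document; each statement's English description precedes it below -/
import Mathlib

section
/- Let π : G → U(H) be a unitary representation of a locally compact group on a nonzero complex Hilbert space H and let (μ_n)_{n>0} be a family of bounded symmetric Borel measures on G. Suppose that for all v,w,v',w' ∈ H one has lim_{n→∞} ∫_G ⟨π(g)v,w⟩·conj(⟨π(g)v',w'⟩) dμ_n(g) = ⟨v,v'⟩·conj(⟨w,w'⟩). Then π is irreducible. -/
open MeasureTheory Filter Topology

local notation "⟪" x ", " y "⟫" => @inner ℂ _ _ x y
local notation "conj'" => starRingEnd ℂ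

/-- Let `π : G → U(H)` be a unitary representation of a locally compact group
on a nonzero complex Hilbert space, and `(μ n)` a family of bounded symmetric Borel measures on
`G`.  If for all `v, w, v', w' ∈ H` the matrix coefficient integrals
`∫ ⟪π g v, w⟫ * conj ⟪π g v', w'⟫ dμ_n` converge to `⟪v, v'⟫ * conj ⟪w, w'⟫`, then `π` is
irreducible: the only closed `π(G)`-invariant subspaces of `H` are `⊥` and `⊤`. -/
theorem irreducible_of_asymptotic_schur
    {G : Type*} [Group G] [TopologicalSpace G] [IsTopologicalGroup G]
    [LocallyCompactSpace G] [T2Space G] [MeasurableSpace G] [BorelSpace G]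
    {H : Type*} [NormedAddCommGroup H] [InnerProductSpace ℂ H] [CompleteSpace H] [Nontrivial H]
    (π : G →* (H ≃ₗᵢ[ℂ] H))
    (hπcont : ∀ v : H, Continuous fun g : G => π g v)
    (μ : ℕ → Measure G) [∀ n, IsFiniteMeasure (μ n)]
    (hμsymm : ∀ n, (μ n).map (fun g => g⁻¹) = μ n)
    (hconv : ∀ v w v' w' : H,
      Tendsto (fun n => ∫ g, ⟪π g v, w⟫ * conj' ⟪π g v', w'⟫ ∂(μ n)) atTop
        (𝓝 (⟪v, v'⟫ * conj' ⟪w, w'⟫))) :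
    ∀ V : Submodule ℂ H, IsClosed (V : Set H) → (∀ g : G, ∀ v ∈ V, π g v ∈ V) →
      V = ⊥ ∨ V = ⊤ := by
  intro V hVclosed hVinv
  by_contra hcon
  push_neg at hcon
  obtain ⟨h1, h2⟩ := hcon
  obtain ⟨v, hvV, hv0⟩ := Submodule.exists_mem_ne_zero_of_ne_bot h1
  have hVc : CompleteSpace V := hVclosed.completeSpace_coe
  have hperp : Vᗮ ≠ ⊥ := fun h => h2 (Submodule.orthogonal_eq_bot_iff.mp h)
  obtain ⟨v', hv'V, hv'0⟩ := Submodule.exists_mem_ne_zero_of_ne_bot hperp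
  have key := hconv v v' v v'
  have hzero : ∀ n, (∫ g, ⟪π g v, v'⟫ * conj' ⟪π g v, v'⟫ ∂(μ n)) = 0 := by
    intro n
    have : ∀ g : G, ⟪π g v, v'⟫ * conj' ⟪π g v, v'⟫ = 0 := by
      intro g
      have := (Submodule.mem_orthogonal V v').mp hv'V (π g v) (hVinv g v hvV)
      rw [this, zero_mul]
    simp only [this, integral_zero]
  have := tendsto_nhds_unique key (by simpa only [hzero] using tendsto_const_nhds)
  rcases mul_eq_zero.mp this with h | h
  · exact hv0 ((inner_self_eq_zero (𝕜 := ℂ)).mp h)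
  · exact hv'0 ((inner_self_eq_zero (𝕜 := ℂ)).mp (by simpa using h))
end

section
/- Let G be a compact Hausdorff group and π : G → U(H) a strongly continuous irreducible unitary representation on a nonzero complex Hilbert space H. Then H is finite dimensional. -/
open MeasureTheory Filter Topology
open ComplexConjugate

section SchurAux
variable {H : Type*} [NormedAddCommGroup H] [InnerProductSpace ℂ H] [CompleteSpace H]

noncomputable def conjSAH (e : H ≃ₗᵢ[ℂ] H) : (H →L[ℂ] H) →⋆ₐ[ℂ] (H →L[ℂ] H) := by
  have hUV : (e : H →L[ℂ] H) * (e.symm : H →L[ℂ] H) = 1 := by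
    ext x; simp [ContinuousLinearMap.mul_apply]
  have hVU : (e.symm : H →L[ℂ] H) * (e : H →L[ℂ] H) = 1 := by
    ext x; simp [ContinuousLinearMap.mul_apply]
  exact
  { toFun := fun S => (e : H →L[ℂ] H) * S * (e.symm : H →L[ℂ] H)
    map_one' := by rw [mul_one, hUV]
    map_mul' := fun S T => by
      have h : ∀ X : H →L[ℂ] H, (e.symm : H →L[ℂ] H) * ((e : H →L[ℂ] H) * X) = X := fun X => by
        rw [← mul_assoc, hVU, one_mul]
      simp only [mul_assoc, h]
    map_zero' := by simp
    map_add' := fun S T => by simp [mul_add, add_mul]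
    commutes' := fun c => by
      simp only [Algebra.algebraMap_eq_smul_one, mul_smul_comm, smul_mul_assoc, mul_one, hUV]
    map_star' := fun S => by
      simp only [star_mul, LinearIsometryEquiv.star_eq_symm, LinearIsometryEquiv.symm_symm,
        mul_assoc] }

lemma conjSAH_apply (e : H ≃ₗᵢ[ℂ] H) (S : H →L[ℂ] H) :
    conjSAH e S = (e : H →L[ℂ] H) * S * (e.symm : H →L[ℂ] H) := rfl

lemma conjSAH_continuous (e : H ≃ₗᵢ[ℂ] H) : Continuous (conjSAH e) :=
  (continuous_mul_left _).comp (continuous_mul_right _)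

variable [Nontrivial H]

lemma schur_aux {ι : Type*} (U : ι → (H ≃ₗᵢ[ℂ] H)) (T : H →L[ℂ] H)
    (hT : IsSelfAdjoint T)
    (hcomm : ∀ i, ((U i : H →L[ℂ] H)) * T = T * ((U i : H →L[ℂ] H)))
    (hirr : ∀ V : Submodule ℂ H, IsClosed (V : Set H) →
      (∀ i, ∀ v ∈ V, (U i) v ∈ V) → V = ⊥ ∨ V = ⊤) :
    ∃ c : ℝ, T = algebraMap ℝ (H →L[ℂ] H) c := by
  have hnt : Nontrivial (H →L[ℂ] H) := by
    refine nontrivial_of_ne 1 0 fun h => ?_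
    obtain ⟨x, hx⟩ := exists_ne (0 : H)
    exact hx (by simpa using ContinuousLinearMap.ext_iff.mp h x)
  -- unitaries commute with the continuous functional calculus of T
  have hcfc : ∀ (f : ℝ → ℝ), Continuous f → ∀ i,
      ((U i : H →L[ℂ] H)) * cfc f T = cfc f T * ((U i : H →L[ℂ] H)) := by
    intro f hf i
    have hUV : ((U i) : H →L[ℂ] H) * ((U i).symm : H →L[ℂ] H) = 1 := by
      ext x; simp [ContinuousLinearMap.mul_apply]
    have hVU : ((U i).symm : H →L[ℂ] H) * ((U i) : H →L[ℂ] H) = 1 := by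
      ext x; simp [ContinuousLinearMap.mul_apply]
    have hφT : conjSAH (U i) T = T := by
      rw [conjSAH_apply, hcomm i, mul_assoc, hUV, mul_one]
    have hmap := StarAlgHomClass.map_cfc (S := ℂ) (conjSAH (U i)) f T
      (hf.continuousOn) (conjSAH_continuous (U i)) hT (by rw [hφT]; exact hT)
    rw [hφT] at hmap
    have : ((U i) : H →L[ℂ] H) * cfc f T * ((U i).symm : H →L[ℂ] H) = cfc f T := hmap
    calc ((U i) : H →L[ℂ] H) * cfc f T
        = ((U i) : H →L[ℂ] H) * cfc f T * (((U i).symm : H →L[ℂ] H) * ((U i) : H →L[ℂ] H)) := by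
          rw [hVU, mul_one]
      _ = (((U i) : H →L[ℂ] H) * cfc f T * ((U i).symm : H →L[ℂ] H)) * ((U i) : H →L[ℂ] H) := by
          simp only [mul_assoc]
      _ = cfc f T * ((U i) : H →L[ℂ] H) := by rw [this]
  -- key: a commuting nonzero operator has dense range; anything annihilating it is zero
  have key : ∀ S S' : H →L[ℂ] H, (∀ i, ((U i : H →L[ℂ] H)) * S = S * ((U i : H →L[ℂ] H))) →
      S ≠ 0 → S' * S = 0 → S' = 0 := by
    intro S S' hScomm hS0 hS'S
    set V : Submodule ℂ H := (LinearMap.range (S : H →ₗ[ℂ] H)).topologicalClosure with hV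
    have hVclosed : IsClosed (V : Set H) := Submodule.isClosed_topologicalClosure _
    have hVinv : ∀ i, ∀ v ∈ V, (U i) v ∈ V := by
      intro i v hv
      have hmapsto : Set.MapsTo (U i) (LinearMap.range (S : H →ₗ[ℂ] H) : Set H) (LinearMap.range (S : H →ₗ[ℂ] H) : Set H) := by
        rintro _ ⟨x, rfl⟩
        refine ⟨(U i) x, ?_⟩
        have := ContinuousLinearMap.ext_iff.mp (hScomm i) x
        simpa [ContinuousLinearMap.mul_apply] using this.symm
      have := hmapsto.closure (U i).continuous
      exact this hv
    rcases hirr V hVclosed hVinv with h | h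
    · exfalso
      apply hS0
      ext x
      have : S x ∈ V := Submodule.le_topologicalClosure _ (LinearMap.mem_range_self _ x)
      rw [h] at this
      simpa using this
    · have hsub : (V : Set H) ⊆ (LinearMap.ker (S' : H →ₗ[ℂ] H) : Set H) := by
        apply closure_minimal
        · rintro _ ⟨x, rfl⟩
          have := ContinuousLinearMap.ext_iff.mp hS'S x
          simpa [ContinuousLinearMap.mul_apply] using this
        · exact ContinuousLinearMap.isClosed_ker S'
      ext x
      have hx : x ∈ V := by rw [h]; trivial
      have := hsub hx
      simpa using this
  -- the real spectrum of T is a subsingleton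
  have hss : (spectrum ℝ T).Subsingleton := by
    intro a ha b hb
    by_contra hab
    have hr0 : 0 < |a - b| := abs_pos.2 (sub_ne_zero.2 hab)
    set r : ℝ := |a - b| with hrdef
    set f : ℝ → ℝ := fun x => max (1 - 3/r * |x - a|) 0 with hfdef
    set g : ℝ → ℝ := fun x => max (1 - 3/r * |x - b|) 0 with hgdef
    have hfc : Continuous f := by fun_prop
    have hgc : Continuous g := by fun_prop
    have hfa : f a = 1 := by simp [hfdef]
    have hgb : g b = 1 := by simp [hgdef]
    have hmulz : ∀ x, g x * f x = 0 := by
      intro x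
      rcases le_or_gt (1 - 3/r * |x - a|) 0 with h | h
      · have : f x = 0 := max_eq_right h
        rw [this, mul_zero]
      · have h3r : 0 < 3 / r := by positivity
        have hxa : |x - a| < r / 3 := by
          by_contra hge
          push_neg at hge
          have h1 : (1:ℝ) ≤ 3 / r * |x - a| := by
            calc (1:ℝ) = 3 / r * (r / 3) := by field_simp
            _ ≤ 3 / r * |x - a| := mul_le_mul_of_nonneg_left hge h3r.le
          linarith
        have hxb : 2 * r / 3 < |x - b| := by
          have h1 : r ≤ |x - a| + |x - b| := by
            calc r = |a - b| := rfl
            _ ≤ |a - x| + |x - b| := abs_sub_le a x b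
            _ = |x - a| + |x - b| := by rw [abs_sub_comm a x]
          linarith
        have : g x = 0 := by
          apply max_eq_right
          have h2 : (2:ℝ) ≤ 3 / r * |x - b| := by
            calc (2:ℝ) = 3 / r * (2 * r / 3) := by field_simp
            _ ≤ 3 / r * |x - b| := mul_le_mul_of_nonneg_left hxb.le h3r.le
          linarith
        rw [this, zero_mul]
    set F := cfc f T with hFdef
    set G' := cfc g T with hGdef
    have hGF : G' * F = 0 := by
      rw [hGdef, hFdef, ← cfc_mul g f T hgc.continuousOn hfc.continuousOn]
      calc cfc (fun x => g x * f x) T = cfc (fun _ : ℝ => (0:ℝ)) T :=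
            cfc_congr (fun x _ => hmulz x)
        _ = algebraMap ℝ (H →L[ℂ] H) 0 := cfc_const 0 T hT
        _ = 0 := map_zero _
    have hF0 : F ≠ 0 := by
      intro h
      have hle := norm_apply_le_norm_cfc f T ha hfc.continuousOn hT
      rw [← hFdef, h] at hle
      simp [hfa] at hle
      linarith
    have hG0 : G' ≠ 0 := by
      intro h
      have hle := norm_apply_le_norm_cfc g T hb hgc.continuousOn hT
      rw [← hGdef, h] at hle
      simp [hgb] at hle
      linarith
    exact hG0 (key F G' (fun i => hcfc f hfc i) hF0 hGF)
  obtain ⟨c, hc⟩ := CFC.spectrum_nonempty ℝ T hT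
  refine ⟨c, ?_⟩
  conv_lhs => rw [← cfc_id ℝ T hT]
  rw [cfc_congr (f := id) (g := fun _ => c) (a := T) (fun x hx => hss hx hc), cfc_const c T hT]


end SchurAux

section Aux2

variable {G : Type*} [TopologicalSpace G] [CompactSpace G] [MeasurableSpace G]
  [OpensMeasurableSpace G] {E : Type*} [NormedAddCommGroup E] {μ : Measure G}
  [IsFiniteMeasureOnCompacts μ]

lemma contIntegrable {f : G → E} (hf : Continuous f) : Integrable f μ :=
  hf.integrable_of_hasCompactSupport ((isClosed_tsupport f).isCompact)
end Aux2

/-- Every strongly continuous irreducible unitary representation of a compact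
Hausdorff group on a nonzero complex Hilbert space is finite dimensional. -/
theorem finiteDimensional_of_compact_irreducible
    {G : Type*} [Group G] [TopologicalSpace G] [IsTopologicalGroup G]
    [CompactSpace G] [T2Space G]
    {H : Type*} [NormedAddCommGroup H] [InnerProductSpace ℂ H] [CompleteSpace H] [Nontrivial H]
    (π : G →* (H ≃ₗᵢ[ℂ] H))
    (hπcont : ∀ v : H, Continuous fun g : G => π g v)
    (hirr : ∀ V : Submodule ℂ H, IsClosed (V : Set H) →
      (∀ g : G, ∀ v ∈ V, π g v ∈ V) → V = ⊥ ∨ V = ⊤) :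
    FiniteDimensional ℂ H := by
  classical
  borelize G
  -- a unit vector
  obtain ⟨v0, hv0⟩ := exists_ne (0 : H)
  set v : H := ‖v0‖⁻¹ • v0 with hv_def
  have hv : ‖v‖ = 1 := by
    rw [hv_def, norm_smul, norm_inv, norm_norm]
    field_simp [norm_ne_zero_iff.mpr hv0]
  -- Haar measure
  let μ : Measure G := Measure.haar
  haveI hHaar : μ.IsHaarMeasure := MeasureTheory.Measure.isHaarMeasure_haarMeasure _
  haveI : μ.IsMulLeftInvariant := hHaar.toIsMulLeftInvariant
  haveI : IsFiniteMeasureOnCompacts μ := hHaar.toIsFiniteMeasureOnCompacts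
  haveI : μ.IsOpenPosMeasure := hHaar.toIsOpenPosMeasure
  haveI : IsFiniteMeasure μ := CompactSpace.isFiniteMeasure
  -- the orbit map
  set u : G → H := fun g => π g v with hu_def
  have hu : Continuous u := hπcont v
  have hu1 : ∀ g, ‖u g‖ = 1 := fun g => by
    rw [hu_def]; simp only [LinearIsometryEquiv.norm_map]; exact hv
  have hpiu : ∀ a g : G, π a (u g) = u (a * g) := by
    intro a g
    rw [hu_def]
    show π a (π g v) = π (a * g) v
    rw [map_mul]
    rfl
  have hInt : ∀ w : H, Integrable (fun g => (inner ℂ (u g) w : ℂ) • u g) μ := fun w =>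
    contIntegrable (((hu.inner continuous_const)).smul hu)
  have hIntInner : ∀ w x : H, Integrable (fun g => (inner ℂ (u g) w : ℂ) * inner ℂ x (u g)) μ :=
    fun w x => contIntegrable ((hu.inner continuous_const).mul (continuous_const.inner hu))
  -- the averaged operator
  set m : ℝ := (μ Set.univ).toReal with hm_def
  let Tl : H →ₗ[ℂ] H :=
    { toFun := fun w => ∫ g, (inner ℂ (u g) w : ℂ) • u g ∂μ
      map_add' := fun w x => by
        simp only [inner_add_right, add_smul]
        exact integral_add (hInt w) (hInt x)
      map_smul' := fun c w => by
        simp only [inner_smul_right, RingHom.id_apply, mul_smul]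
        exact integral_smul c _ }
  have hTlb : ∀ w, ‖Tl w‖ ≤ m * ‖w‖ := by
    intro w
    have h2 : ‖Tl w‖ ≤ ‖w‖ * (μ Set.univ).toReal := by
      refine norm_integral_le_of_norm_le_const (Eventually.of_forall fun g => ?_)
      rw [norm_smul, hu1 g, mul_one]
      calc ‖(inner ℂ (u g) w : ℂ)‖ ≤ ‖u g‖ * ‖w‖ := norm_inner_le_norm _ _
        _ = ‖w‖ := by rw [hu1, one_mul]
    rw [hm_def, mul_comm]
    exact h2
  let T : H →L[ℂ] H := Tl.mkContinuous m hTlb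
  have hTap : ∀ w, T w = ∫ g, (inner ℂ (u g) w : ℂ) • u g ∂μ := fun w => rfl
  have hInner : ∀ w x : H, (inner ℂ x (T w) : ℂ)
      = ∫ g, (inner ℂ (u g) w : ℂ) * inner ℂ x (u g) ∂μ := by
    intro w x
    rw [hTap, ← integral_inner (hInt w) x]
    congr 1
    ext g
    rw [inner_smul_right]
  -- self-adjoint
  have hsym : IsSelfAdjoint T := by
    rw [ContinuousLinearMap.isSelfAdjoint_iff_isSymmetric]
    intro w x
    show (inner ℂ (T w) x : ℂ) = inner ℂ w (T x)
    have h1 : (inner ℂ (T w) x : ℂ) = conj (inner ℂ x (T w) : ℂ) := (inner_conj_symm _ _).symm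
    rw [h1, hInner w x, ← integral_conj, hInner x w]
    congr 1
    ext g
    simp only [map_mul, inner_conj_symm]
    ring
  -- commutes with the representation
  have hcomm : ∀ h : G, ((π h : H →L[ℂ] H)) * T = T * ((π h : H →L[ℂ] H)) := by
    intro h
    ext w
    show (π h) (T w) = T ((π h) w)
    have e0 := ContinuousLinearMap.integral_comp_comm (π h : H →L[ℂ] H) (hInt w)
    have e1 : (π h) (T w) = ∫ g, (inner ℂ (u g) w : ℂ) • u (h * g) ∂μ := by
      rw [hTap]
      refine Eq.trans e0.symm ?_
      congr 1
      funext g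
      show (π h) ((inner ℂ (u g) w : ℂ) • u g) = (inner ℂ (u g) w : ℂ) • u (h * g)
      rw [LinearIsometryEquiv.map_smul, hpiu]
    have e2 : T ((π h) w) = ∫ g, (inner ℂ (u (h⁻¹ * g)) w : ℂ) • u g ∂μ := by
      rw [hTap]
      congr 1
      funext g
      congr 1
      have h3 : (inner ℂ (u g) ((π h) w) : ℂ) = inner ℂ (π h (u (h⁻¹ * g))) (π h w) := by
        rw [hpiu, mul_inv_cancel_left]
      rw [h3, LinearIsometryEquiv.inner_map_map]
    have e3 : ∫ g, (inner ℂ (u g) w : ℂ) • u (h * g) ∂μ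
        = ∫ g, (inner ℂ (u (h⁻¹ * g)) w : ℂ) • u g ∂μ := by
      have e4 := integral_mul_left_eq_self (μ := μ)
        (fun g => (inner ℂ (u (h⁻¹ * g)) w : ℂ) • u g) h
      rw [← e4]
      congr 1
      funext g
      rw [inv_mul_cancel_left]
    rw [e1, e3, ← e2]
  -- Schur's lemma
  obtain ⟨c, hcT⟩ := schur_aux (fun g => π g) T hsym hcomm hirr
  have hTx : ∀ x : H, T x = (c : ℂ) • x := by
    intro x
    rw [hcT, Algebra.algebraMap_eq_smul_one]
    show c • ((1 : H →L[ℂ] H) x) = (c : ℂ) • x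
    rw [ContinuousLinearMap.one_apply, Complex.coe_smul]
  -- the key identity
  have hkey : ∀ x : H, ∫ g, ‖(inner ℂ (u g) x : ℂ)‖^2 ∂μ = c * ‖x‖^2 := by
    intro x
    have h1 : (inner ℂ x (T x) : ℂ) = ∫ g, (inner ℂ (u g) x : ℂ) * inner ℂ x (u g) ∂μ := hInner x x
    have h2 : (inner ℂ x (T x) : ℂ) = (c : ℂ) * ((‖x‖:ℂ))^2 := by
      rw [hTx, inner_smul_right, inner_self_eq_norm_sq_to_K]
      rfl
    have h3 : ∀ g : G, (inner ℂ (u g) x : ℂ) * inner ℂ x (u g)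
        = ((‖(inner ℂ (u g) x : ℂ)‖^2 : ℝ) : ℂ) := by
      intro g
      rw [← inner_conj_symm x (u g), Complex.mul_conj']
      norm_cast
    have h4 : ∫ g, ((‖(inner ℂ (u g) x : ℂ)‖^2 : ℝ) : ℂ) ∂μ = (c:ℂ) * ((‖x‖:ℂ))^2 := by
      rw [← h2, h1]
      congr 1
      funext g
      rw [h3]
    have h5 : ∫ g, ((‖(inner ℂ (u g) x : ℂ)‖^2 : ℝ) : ℂ) ∂μ
        = ((∫ g, ‖(inner ℂ (u g) x : ℂ)‖^2 ∂μ : ℝ) : ℂ) := integral_ofReal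
    rw [h5] at h4
    exact_mod_cast h4
  -- positivity of c
  have hnormsq : ∀ x : H, Continuous fun g => ‖(inner ℂ (u g) x : ℂ)‖^2 := fun x =>
    ((hu.inner continuous_const).norm).pow 2
  have hc : 0 < c := by
    have h1 : ∫ g, ‖(inner ℂ (u g) v : ℂ)‖^2 ∂μ = c := by rw [hkey v, hv]; ring
    rw [← h1]
    have hfc := hnormsq v
    rw [integral_pos_iff_support_of_nonneg (fun g => by positivity) (contIntegrable hfc)]
    have hopen : IsOpen (Function.support fun g => ‖(inner ℂ (u g) v : ℂ)‖^2) := by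
      have : (Function.support fun g => ‖(inner ℂ (u g) v : ℂ)‖^2)
          = (fun g => ‖(inner ℂ (u g) v : ℂ)‖^2) ⁻¹' {0}ᶜ := by
        ext g; simp [Function.mem_support]
      rw [this]
      exact hfc.isOpen_preimage _ (isOpen_compl_singleton)
    refine hopen.measure_pos μ ⟨1, ?_⟩
    have hu1v : u 1 = v := by rw [hu_def]; show π 1 v = v; rw [map_one]; rfl
    simp only [Function.mem_support, hu1v]
    rw [inner_self_eq_norm_sq_to_K]
    simp [hv]
  -- finally: finite dimensionality
  obtain ⟨w, b, hbw⟩ := exists_hilbertBasis ℂ H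
  rcases Set.finite_or_infinite w with hfin | hinf
  · have hfd : FiniteDimensional ℂ (Submodule.span ℂ w) := FiniteDimensional.span_of_finite ℂ hfin
    have hclosed : IsClosed ((Submodule.span ℂ w : Submodule ℂ H) : Set H) :=
      Submodule.closed_of_finiteDimensional _
    have htop : (Submodule.span ℂ w).topologicalClosure = ⊤ := by
      have := b.dense_span
      rwa [hbw, Subtype.range_coe] at this
    have : Submodule.span ℂ w = ⊤ := by
      rw [← htop]
      exact (IsClosed.submodule_topologicalClosure_eq hclosed).symm
    rw [this] at hfd
    haveI := hfd
    exact Submodule.topEquiv.finiteDimensional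
  · exfalso
    set e := hinf.natEmbedding with he_def
    have hON : Orthonormal ℂ (fun n : ℕ => (e n : H)) := by
      have h1 : Orthonormal ℂ (fun i : w => (i : H)) := by
        have := b.orthonormal
        rwa [hbw] at this
      exact h1.comp e e.injective
    -- each term integrates to c
    have hterm : ∀ n : ℕ, ∫ g, ‖(inner ℂ (u g) ((e n : H)) : ℂ)‖^2 ∂μ = c := by
      intro n
      rw [hkey, hON.1 n]
      ring
    obtain ⟨n, hn⟩ := exists_nat_gt (m / c)
    have hbound : (n : ℝ) * c ≤ m := by
      have hIntSum : Integrable (fun g => ∑ i ∈ Finset.range n,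
          ‖(inner ℂ (u g) ((e i : H)) : ℂ)‖^2) μ := by
        exact contIntegrable (continuous_finset_sum _ (fun i _ => hnormsq _))
      have h1 : ∑ i ∈ Finset.range n, ∫ g, ‖(inner ℂ (u g) ((e i : H)) : ℂ)‖^2 ∂μ
          = ∫ g, ∑ i ∈ Finset.range n, ‖(inner ℂ (u g) ((e i : H)) : ℂ)‖^2 ∂μ := by
        rw [integral_finset_sum]
        intro i _
        exact contIntegrable (hnormsq _)
      have h2 : ∫ g, (∑ i ∈ Finset.range n, ‖(inner ℂ (u g) ((e i : H)) : ℂ)‖^2) ∂μ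
          ≤ ∫ (_ : G), (1:ℝ) ∂μ := by
        apply integral_mono hIntSum (integrable_const 1)
        intro g
        have hb := hON.sum_inner_products_le (u g) (s := Finset.range n)
        calc ∑ i ∈ Finset.range n, ‖(inner ℂ (u g) ((e i : H)) : ℂ)‖^2
            = ∑ i ∈ Finset.range n, ‖(inner ℂ ((e i : H)) (u g) : ℂ)‖^2 := by
              congr 1; funext i; rw [norm_inner_symm]
          _ ≤ ‖u g‖^2 := hb
          _ = 1 := by rw [hu1]; norm_num
      have h3 : ∫ (_ : G), (1:ℝ) ∂μ = m := by
        rw [integral_const, smul_eq_mul, mul_one, hm_def]; rfl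
      calc (n : ℝ) * c = ∑ i ∈ Finset.range n, c := by
            rw [Finset.sum_const, Finset.card_range, nsmul_eq_mul]
        _ = ∑ i ∈ Finset.range n, ∫ g, ‖(inner ℂ (u g) ((e i : H)) : ℂ)‖^2 ∂μ := by
            congr 1; funext i; rw [hterm]
        _ = ∫ g, ∑ i ∈ Finset.range n, ‖(inner ℂ (u g) ((e i : H)) : ℂ)‖^2 ∂μ := h1
        _ ≤ m := h2.trans_eq h3
    have : m / c < n := hn
    have : m < n * c := (div_lt_iff₀ hc).mp hn
    linarith
end

section
/- Let π : G → U(H) be a unitary representation of a locally compact unimodular group with Haar measure dg, let L be a length function on G with balls B_n, and suppose there exist d ∈ ℕ and f > 0 such that for all v, w, v', w' ∈ H, lim_{n→∞} (f/n^d) ∫_{B_n} ⟨π(g)v,w⟩·conj(⟨π(g)v',w'⟩) dg = ⟨v,v'⟩·conj(⟨w,w'⟩). Then π has property RD with respect to L: there exists a polynomial P(X) ∈ ℝ[X] such that for all v, w ∈ H with ‖v‖ ≤ 1 and ‖w‖ ≤ 1 and all n ∈ ℕ, ∫_{B_n} |⟨π(g)v,w⟩|² dg ≤ P(n). -/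
open MeasureTheory Filter Topology

local notation "⟪" x ", " y "⟫" => @inner ℂ _ _ x y
local notation "conj'" => starRingEnd ℂ

set_option maxHeartbeats 1600000

/-- **Asymptotic Schur orthogonality implies property RD.** Let `π : G → U(H)`
be a unitary representation of a locally compact unimodular group with Haar measure `haar`,
`L` a length function on `G` with balls `B_n = {g | L g ≤ n}`, and suppose there exist `d ∈ ℕ`
and `f > 0` such that for all `v, w, v', w' ∈ H`,
`(f / n^d) ∫_{B_n} ⟪π g v, w⟫ * conj ⟪π g v', w'⟫ dg → ⟪v, v'⟫ * conj ⟪w, w'⟫`.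
Then `π` has property RD with respect to `L`: there is a real polynomial `P` such that for all
unit-ball vectors `v, w` and all `n ∈ ℕ`, `∫_{B_n} |⟪π g v, w⟫|² dg ≤ P(n)`. -/
theorem property_RD_of_asymptotic_schur
    {G : Type*} [Group G] [TopologicalSpace G] [IsTopologicalGroup G]
    [LocallyCompactSpace G] [T2Space G] [MeasurableSpace G] [BorelSpace G]
    (haar : Measure G) [haar.IsHaarMeasure] [haar.IsMulRightInvariant]
    {H : Type*} [NormedAddCommGroup H] [InnerProductSpace ℂ H] [CompleteSpace H]
    (π : G →* (H ≃ₗᵢ[ℂ] H))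
    (hπcont : ∀ v : H, Continuous fun g : G => π g v)
    (L : G → ℝ) (hL_meas : Measurable L) (hL_nonneg : ∀ g, 0 ≤ L g)
    (hL_one : L 1 = 0)
    (hL_inv : ∀ g, L g⁻¹ = L g)
    (hL_sub : ∀ g h : G, L (g * h) ≤ L g + L h)
    (hL_proper : ∀ s : Set ℝ, Bornology.IsBounded s → IsCompact (closure (L ⁻¹' s)))
    (d : ℕ) (f : ℝ) (hf : 0 < f)
    (hconv : ∀ v w v' w' : H,
      Tendsto (fun n : ℕ =>
          ((f : ℂ) / (n : ℂ) ^ d) *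
            ∫ g in {g : G | L g ≤ (n : ℝ)}, ⟪π g v, w⟫ * conj' ⟪π g v', w'⟫ ∂haar) atTop
        (𝓝 (⟪v, v'⟫ * conj' ⟪w, w'⟫))) :
    ∃ P : Polynomial ℝ, ∀ v w : H, ‖v‖ ≤ 1 → ‖w‖ ≤ 1 → ∀ n : ℕ,
      ∫ g in {g : G | L g ≤ (n : ℝ)}, ‖⟪π g v, w⟫‖ ^ 2 ∂haar ≤ P.eval (n : ℝ) := by
  have hBmeas : ∀ n : ℕ, MeasurableSet {g : G | L g ≤ (n:ℝ)} := fun n => hL_meas measurableSet_Iic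
  have hBfin : ∀ n : ℕ, haar {g : G | L g ≤ (n:ℝ)} < ⊤ := by
    intro n
    have hsub : {g : G | L g ≤ (n:ℝ)} ⊆ closure (L ⁻¹' Set.Icc 0 (n:ℝ)) :=
      fun g hg => subset_closure ⟨hL_nonneg g, hg⟩
    exact lt_of_le_of_lt (measure_mono hsub)
      ((hL_proper _ (Metric.isBounded_Icc 0 (n:ℝ))).measure_lt_top)
  have hcg : ∀ v w : H, Continuous fun g : G => ⟪π g v, w⟫ :=
    fun v w => (hπcont v).inner continuous_const
  have hbound : ∀ (v w : H) (g : G), ‖⟪π g v, w⟫‖ ^ 2 ≤ (‖v‖*‖w‖)^2 := by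
    intro v w g
    have h1 : ‖⟪π g v, w⟫‖ ≤ ‖π g v‖ * ‖w‖ := norm_inner_le_norm _ _
    rw [(π g).norm_map] at h1
    exact pow_le_pow_left₀ (norm_nonneg _) h1 2
  have hInt : ∀ (n : ℕ) (v w : H),
      IntegrableOn (fun g => ‖⟪π g v, w⟫‖ ^ 2) {g : G | L g ≤ (n:ℝ)} haar := by
    intro n v w
    have hc : IntegrableOn (fun _ : G => (‖v‖*‖w‖)^2) {g : G | L g ≤ (n:ℝ)} haar :=
      integrableOn_const (hBfin n).ne
    refine Integrable.mono' hc (((hcg v w).norm.pow 2)).aestronglyMeasurable ?_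
    filter_upwards with g
    rw [Real.norm_eq_abs, abs_of_nonneg (by positivity)]
    exact hbound v w g
  set Q : ℕ → H → H → ℝ := fun n v w => ∫ g in {g : G | L g ≤ (n:ℝ)}, ‖⟪π g v, w⟫‖ ^ 2 ∂haar with hQdef
  have hQnonneg : ∀ n v w, 0 ≤ Q n v w := fun n v w =>
    setIntegral_nonneg (hBmeas n) (fun g _ => by positivity)
  have hmono : ∀ n (v w : H), Q n v w ≤ Q (n+1) v w := by
    intro n v w
    apply setIntegral_mono_set (hInt (n+1) v w)
    · filter_upwards with g using by positivity
    · apply HasSubset.Subset.eventuallyLE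
      intro g hg
      simp only [Set.mem_setOf_eq] at hg ⊢
      exact le_trans hg (by push_cast; linarith)
  have hpt : ∀ v w : H, ∃ C : ℝ, 0 ≤ C ∧ ∀ n : ℕ, Q n v w ≤ C * ((n:ℝ)+1)^d := by
    intro v w
    have h := hconv v w v w
    have key : ∀ n : ℕ, (∫ g in {g : G | L g ≤ (n:ℝ)}, ⟪π g v, w⟫ * conj' ⟪π g v, w⟫ ∂haar)
        = ((Q n v w : ℝ) : ℂ) := by
      intro n
      calc (∫ g in {g : G | L g ≤ (n:ℝ)}, ⟪π g v, w⟫ * conj' ⟪π g v, w⟫ ∂haar)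
          = ∫ g in {g : G | L g ≤ (n:ℝ)}, ((‖⟪π g v, w⟫‖ ^ 2 : ℝ) : ℂ) ∂haar := by
            apply integral_congr_ae
            filter_upwards with g
            rw [Complex.mul_conj]
            norm_cast
            rw [Complex.normSq_eq_norm_sq]
        _ = ((Q n v w : ℝ) : ℂ) := integral_ofReal
    simp only [key] at h
    obtain ⟨C0, hC0⟩ := h.norm.bddAbove_range
    rw [mem_upperBounds] at hC0
    have hC0' : ∀ n : ℕ, ‖((f:ℂ) / (n:ℂ)^d) * ((Q n v w : ℝ) : ℂ)‖ ≤ C0 := by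
      intro n; exact hC0 _ ⟨n, rfl⟩
    have hC0nonneg : 0 ≤ C0 := le_trans (norm_nonneg _) (hC0' 0)
    have htight : ∀ n : ℕ, 1 ≤ n → Q n v w ≤ C0 * ((n:ℝ)^d) / f := by
      intro n hn1
      have hnpos : (0:ℝ) < (n:ℝ)^d := by
        have : (0:ℝ) < (n:ℝ) := by exact_mod_cast hn1
        positivity
      have heq : ‖((f:ℂ) / (n:ℂ)^d) * ((Q n v w : ℝ) : ℂ)‖ = (f / (n:ℝ)^d) * Q n v w := by
        have h5 : ((f:ℂ) / (n:ℂ)^d) * ((Q n v w : ℝ) : ℂ)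
            = (((f / (n:ℝ)^d) * Q n v w : ℝ) : ℂ) := by push_cast; ring
        rw [h5, Complex.norm_real, Real.norm_eq_abs, abs_of_nonneg]
        have := hQnonneg n v w
        positivity
      have h3 : (f / (n:ℝ)^d) * Q n v w ≤ C0 := heq ▸ hC0' n
      rw [le_div_iff₀ hf]
      calc Q n v w * f = ((f/(n:ℝ)^d) * Q n v w) * (n:ℝ)^d := by field_simp
        _ ≤ C0 * (n:ℝ)^d := by nlinarith
    refine ⟨max (C0/f) 0, le_max_right _ _, ?_⟩
    intro n
    rcases Nat.eq_zero_or_pos n with rfl | hn1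
    · have h1 := htight 1 le_rfl
      simp only [Nat.cast_one, one_pow, Nat.cast_zero] at *
      calc Q 0 v w ≤ Q 1 v w := hmono 0 v w
        _ ≤ C0 * 1 / f := h1
        _ ≤ max (C0/f) 0 * (0+1)^d := by
            simp only [mul_one]
            rw [show ((0:ℝ)+1)^d = 1 by simp]
            simpa using le_max_left (C0/f) 0
    · have h1 := htight n hn1
      have hpow : (n:ℝ)^d ≤ ((n:ℝ)+1)^d :=
        pow_le_pow_left₀ (by positivity) (by linarith) d
      calc Q n v w ≤ C0 * (n:ℝ)^d / f := h1
        _ ≤ C0 * ((n:ℝ)+1)^d / f := by gcongr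
        _ = (C0/f) * ((n:ℝ)+1)^d := by ring
        _ ≤ max (C0/f) 0 * ((n:ℝ)+1)^d := by
            have : C0/f ≤ max (C0/f) 0 := le_max_left _ _
            nlinarith [pow_nonneg (by positivity : (0:ℝ) ≤ (n:ℝ)+1) d]
  -- continuity of Q in (v, w)
  have hQc : ∀ n : ℕ, Continuous fun p : H × H => Q n p.1 p.2 := by
    intro n
    rw [continuous_iff_continuousAt]
    intro p0
    have : ContinuousAt
        (fun p : H × H => ∫ g, ‖⟪π g p.1, p.2⟫‖ ^ 2 ∂(haar.restrict {g : G | L g ≤ (n:ℝ)})) p0 := by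
      apply MeasureTheory.continuousAt_of_dominated
        (bound := fun _ : G => ((‖p0.1‖+1)*(‖p0.2‖+1))^2)
      · filter_upwards with p
        exact ((hcg p.1 p.2).norm.pow 2).aestronglyMeasurable
      · filter_upwards [Metric.ball_mem_nhds p0 one_pos] with p hp
        filter_upwards with g
        have h1 : ‖p.1‖ ≤ ‖p0.1‖ + 1 := by
          have hd : dist p.1 p0.1 < 1 := lt_of_le_of_lt (le_max_left _ _)
            (by rw [← Prod.dist_eq]; exact hp)
          have := norm_sub_norm_le p.1 p0.1
          rw [← dist_eq_norm] at this
          linarith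
        have h2 : ‖p.2‖ ≤ ‖p0.2‖ + 1 := by
          have hd : dist p.2 p0.2 < 1 := lt_of_le_of_lt (le_max_right _ _)
            (by rw [← Prod.dist_eq]; exact hp)
          have := norm_sub_norm_le p.2 p0.2
          rw [← dist_eq_norm] at this
          linarith
        have hb := hbound p.1 p.2 g
        rw [Real.norm_eq_abs, abs_of_nonneg (by positivity)]
        refine hb.trans ?_
        have h3 : ‖p.1‖ * ‖p.2‖ ≤ (‖p0.1‖+1) * (‖p0.2‖+1) := by
          apply mul_le_mul h1 h2 (norm_nonneg _) (by positivity)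
        exact pow_le_pow_left₀ (by positivity) h3 2
      · exact integrableOn_const (hBfin n).ne
      · filter_upwards with g
        exact ((((π g).continuous.comp continuous_fst).inner continuous_snd).norm.pow 2).continuousAt
    exact this
  -- Baire category argument
  set E : ℕ → Set (H × H) :=
    fun k => {p : H × H | ∀ n : ℕ, Q n p.1 p.2 ≤ (k:ℝ) * ((n:ℝ)+1)^d} with hEdef
  have hEclosed : ∀ k, IsClosed (E k) := by
    intro k
    have : E k = ⋂ n : ℕ, {p : H × H | Q n p.1 p.2 ≤ (k:ℝ) * ((n:ℝ)+1)^d} := by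
      ext p; simp [hEdef, Set.mem_iInter]
    rw [this]
    exact isClosed_iInter fun n => isClosed_le (hQc n) continuous_const
  have hEcover : (⋃ k : ℕ, E k) = Set.univ := by
    ext p
    simp only [Set.mem_iUnion, Set.mem_univ, iff_true]
    obtain ⟨C, hCnn, hC⟩ := hpt p.1 p.2
    obtain ⟨k, hk⟩ := exists_nat_ge C
    exact ⟨k, fun n => (hC n).trans (mul_le_mul_of_nonneg_right hk (by positivity))⟩
  obtain ⟨k, hk⟩ := nonempty_interior_of_iUnion_of_closed hEclosed hEcover
  obtain ⟨p0, hp0⟩ := hk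
  obtain ⟨r, hr, hball⟩ := Metric.isOpen_iff.mp isOpen_interior p0 hp0
  have hballE : Metric.ball p0 r ⊆ E k := hball.trans interior_subset
  -- subadditivity in each variable
  have hptsub : ∀ (a b c : ℂ), a = b - c → ‖a‖^2 ≤ 2*‖b‖^2 + 2*‖c‖^2 := by
    intro a b c ha
    subst ha
    have h1 : ‖b - c‖ ≤ ‖b‖ + ‖c‖ := norm_sub_le _ _
    have h2 : ‖b - c‖^2 ≤ (‖b‖ + ‖c‖)^2 := pow_le_pow_left₀ (norm_nonneg _) h1 2
    nlinarith [h2, sq_nonneg (‖b‖ - ‖c‖)]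
  have hsubgen : ∀ (n : ℕ) (φ ψ χ : G → ℂ),
      (∀ g, φ g = ψ g - χ g) →
      IntegrableOn (fun g => ‖φ g‖^2) {g : G | L g ≤ (n:ℝ)} haar →
      IntegrableOn (fun g => ‖ψ g‖^2) {g : G | L g ≤ (n:ℝ)} haar →
      IntegrableOn (fun g => ‖χ g‖^2) {g : G | L g ≤ (n:ℝ)} haar →
      (∫ g in {g : G | L g ≤ (n:ℝ)}, ‖φ g‖^2 ∂haar)
        ≤ 2 * (∫ g in {g : G | L g ≤ (n:ℝ)}, ‖ψ g‖^2 ∂haar)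
          + 2 * (∫ g in {g : G | L g ≤ (n:ℝ)}, ‖χ g‖^2 ∂haar) := by
    intro n φ ψ χ hd hφ hψ hχ
    have hle : ∀ g ∈ {g : G | L g ≤ (n:ℝ)}, ‖φ g‖^2 ≤ 2*‖ψ g‖^2 + 2*‖χ g‖^2 :=
      fun g _ => hptsub _ _ _ (hd g)
    calc (∫ g in {g : G | L g ≤ (n:ℝ)}, ‖φ g‖^2 ∂haar)
        ≤ ∫ g in {g : G | L g ≤ (n:ℝ)}, (2*‖ψ g‖^2 + 2*‖χ g‖^2) ∂haar := by
          apply setIntegral_mono_on hφ ((hψ.const_mul 2).add (hχ.const_mul 2)) (hBmeas n) hle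
      _ = 2 * (∫ g in {g : G | L g ≤ (n:ℝ)}, ‖ψ g‖^2 ∂haar)
          + 2 * (∫ g in {g : G | L g ≤ (n:ℝ)}, ‖χ g‖^2 ∂haar) := by
          rw [integral_add (hψ.const_mul 2) (hχ.const_mul 2), integral_const_mul, integral_const_mul]
  have hsub1 : ∀ (n : ℕ) (a b y : H), Q n (a - b) y ≤ 2 * Q n a y + 2 * Q n b y := by
    intro n a b y
    exact hsubgen n _ _ _
      (fun g => by rw [_root_.map_sub, inner_sub_left]) (hInt n (a-b) y) (hInt n a y) (hInt n b y)
  have hsub2 : ∀ (n : ℕ) (x a b : H), Q n x (a - b) ≤ 2 * Q n x a + 2 * Q n x b := by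
    intro n x a b
    exact hsubgen n _ _ _
      (fun g => by rw [inner_sub_right]) (hInt n x (a-b)) (hInt n x a) (hInt n x b)
  -- scaling
  have hscale : ∀ (n : ℕ) (c : ℝ) (v w : H),
      Q n ((c:ℂ) • v) ((c:ℂ) • w) = c^4 * Q n v w := by
    intro n c v w
    have hpt' : ∀ g : G, ‖⟪π g ((c:ℂ) • v), (c:ℂ) • w⟫‖ ^ 2 = c^4 * ‖⟪π g v, w⟫‖ ^ 2 := by
      intro g
      have habs : |c|^4 = c^4 := Even.pow_abs (by decide) c
      rw [_root_.map_smul, inner_smul_left, inner_smul_right]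
      simp only [norm_mul, RCLike.norm_conj, Complex.norm_real, Real.norm_eq_abs]
      rw [← habs]
      ring
    simp only [hQdef]
    rw [← integral_const_mul]
    exact integral_congr_ae (Filter.Eventually.of_forall hpt')
  -- conclusion
  have hc : (0:ℝ) < r/2 := by linarith
  refine ⟨Polynomial.C (16*(k:ℝ)/(r/2)^4) * (Polynomial.X + 1)^d, ?_⟩
  intro v w hv hw n
  have hmem : ∀ x y : H, ‖x‖ < r → ‖y‖ < r →
      ∀ m : ℕ, Q m (p0.1 + x) (p0.2 + y) ≤ (k:ℝ) * ((m:ℝ)+1)^d := by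
    intro x y hx hy
    have : (p0.1 + x, p0.2 + y) ∈ Metric.ball p0 r := by
      rw [Metric.mem_ball, Prod.dist_eq]
      simp only [dist_eq_norm, add_sub_cancel_left]
      exact max_lt hx hy
    have h := hballE this
    simp only [hEdef, Set.mem_setOf_eq] at h
    exact h
  set c : ℝ := r/2 with hcdef
  set u : H := (c:ℂ) • v with hudef
  set u' : H := (c:ℂ) • w with hudef'
  have hun : ‖u‖ < r := by
    rw [hudef, norm_smul, Complex.norm_real, Real.norm_eq_abs, abs_of_pos hc]
    nlinarith [norm_nonneg v]
  have hun' : ‖u'‖ < r := by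
    rw [hudef', norm_smul, Complex.norm_real, Real.norm_eq_abs, abs_of_pos hc]
    nlinarith [norm_nonneg w]
  have hz : ‖(0:H)‖ < r := by simpa using hr
  have hA := hmem u u' hun hun' n
  have hB := hmem u 0 hun hz n
  have hC := hmem 0 u' hz hun' n
  have hD := hmem 0 0 hz hz n
  simp only [add_zero] at hB hC hD
  have hstep1 : Q n u u' ≤ 2 * Q n (p0.1 + u) u' + 2 * Q n p0.1 u' := by
    have := hsub1 n (p0.1 + u) p0.1 u'
    rwa [add_sub_cancel_left] at this
  have hstep2 : Q n (p0.1 + u) u' ≤ 2 * Q n (p0.1 + u) (p0.2 + u') + 2 * Q n (p0.1 + u) p0.2 := by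
    have := hsub2 n (p0.1 + u) (p0.2 + u') p0.2
    rwa [add_sub_cancel_left] at this
  have hstep3 : Q n p0.1 u' ≤ 2 * Q n p0.1 (p0.2 + u') + 2 * Q n p0.1 p0.2 := by
    have := hsub2 n p0.1 (p0.2 + u') p0.2
    rwa [add_sub_cancel_left] at this
  have hK : (0:ℝ) ≤ (k:ℝ) * ((n:ℝ)+1)^d := by positivity
  have hfinal : Q n u u' ≤ 16 * ((k:ℝ) * ((n:ℝ)+1)^d) := by
    nlinarith [hQnonneg n (p0.1+u) (p0.2+u'), hQnonneg n (p0.1+u) p0.2,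
      hQnonneg n p0.1 (p0.2+u'), hQnonneg n p0.1 p0.2]
  have hQs : Q n u u' = c^4 * Q n v w := hscale n c v w
  have hgoal : Q n v w ≤ 16*(k:ℝ)/c^4 * ((n:ℝ)+1)^d := by
    have hc4 : (0:ℝ) < c^4 := by positivity
    rw [div_mul_eq_mul_div, le_div_iff₀ hc4]
    calc Q n v w * c^4 = Q n u u' := by rw [hQs]; ring
      _ ≤ 16 * ((k:ℝ) * ((n:ℝ)+1)^d) := hfinal
      _ = 16 * (k:ℝ) * ((n:ℝ)+1)^d := by ring
  simp only [hQdef] at hgoal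
  rw [Polynomial.eval_mul, Polynomial.eval_pow, Polynomial.eval_C, Polynomial.eval_add,
    Polynomial.eval_X, Polynomial.eval_one]
  exact hgoal
end
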